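/- Let n ≥ 1 and take a = b = 1, i.e., the Exponential(1) prior e^{−λ} for λ. Then the Bayes factor for the all-zero sample is B₁₀(0⃗) = [∫₀^1 ∫₀^∞ (p + (1−p)e^{−λ})^n e^{−λ} dλ dp] / [∫₀^∞ e^{−(n+1)λ} dλ] = Σ_{j=0}^{n} 1/(j+1), and B₁₀(0⃗)/log(n+1) → 1 as n → ∞. -/

import Mathlib

open MeasureTheory Real Set Filter Topology

private lemma zip_aux_exp_integral (c : ℝ) (hc : 0 < c) :
    ∫ x in Set.Ioi (0:ℝ), Real.exp (-c * x) = c⁻¹ := by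
  have hder : ∀ x ∈ Set.Ici (0:ℝ),
      HasDerivAt (fun x => -c⁻¹ * Real.exp (-c * x)) (Real.exp (-c * x)) x := by
    intro x _
    have h1 : HasDerivAt (fun x : ℝ => -c * x) (-c) x := by
      simpa using (hasDerivAt_id x).const_mul (-c)
    have h2 := (h1.exp).const_mul (-c⁻¹)
    refine h2.congr_deriv ?_
    field_simp
  have hint : IntegrableOn (fun x => Real.exp (-c * x)) (Set.Ioi (0:ℝ)) :=
    exp_neg_integrableOn_Ioi 0 hc
  have hlim : Tendsto (fun x => -c⁻¹ * Real.exp (-c * x)) atTop (nhds 0) := by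
    have h3 : Tendsto (fun x : ℝ => -c * x) atTop atBot :=
      Filter.Tendsto.const_mul_atTop_of_neg (neg_neg_iff_pos.mpr hc) tendsto_id
    have := Real.tendsto_exp_atBot.comp h3
    simpa using this.const_mul (-c⁻¹)
  rw [integral_Ioi_of_hasDerivAt_of_tendsto' hder hint hlim]
  simp

private lemma zip_aux_integrable (n : ℕ) {p : ℝ} (hp : p ∈ Set.Ioo (0:ℝ) 1) :
    IntegrableOn (fun l => (p + (1 - p) * Real.exp (-l)) ^ n * Real.exp (-l))
      (Set.Ioi (0:ℝ)) := by
  have hbase : IntegrableOn (fun l : ℝ => Real.exp (-1 * l)) (Set.Ioi (0:ℝ)) :=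
    exp_neg_integrableOn_Ioi 0 one_pos
  refine Integrable.mono' hbase (Continuous.aestronglyMeasurable (by continuity)) ?_
  rw [ae_restrict_iff' measurableSet_Ioi]
  filter_upwards with l hl
  have he : 0 < Real.exp (-l) := Real.exp_pos _
  have he1 : Real.exp (-l) ≤ 1 := Real.exp_le_one_iff.mpr (by simp [le_of_lt (show 0 < l from hl)])
  have h0 : 0 ≤ p + (1 - p) * Real.exp (-l) := by nlinarith [hp.1, hp.2]
  have h1 : p + (1 - p) * Real.exp (-l) ≤ 1 := by nlinarith [hp.1, hp.2]
  rw [Real.norm_eq_abs, abs_of_nonneg (by positivity)]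
  calc (p + (1 - p) * Real.exp (-l)) ^ n * Real.exp (-l)
      ≤ 1 ^ n * Real.exp (-l) :=
        mul_le_mul_of_nonneg_right (pow_le_pow_left₀ h0 h1 n) he.le
    _ = Real.exp (-1 * l) := by simp

private lemma zip_aux_inner_val (n : ℕ) {p : ℝ} (hp : p ∈ Set.Ioo (0:ℝ) 1) :
    ∫ l in Set.Ioi (0:ℝ), (p + (1 - p) * Real.exp (-l)) ^ n * Real.exp (-l) =
      (∑ j ∈ Finset.range (n + 1), p ^ j) / ((n : ℝ) + 1) := by
  have hpne : (1 : ℝ) - p ≠ 0 := by linarith [hp.2]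
  have hpne' : p - 1 ≠ 0 := by linarith [hp.2]
  set c : ℝ := ((n:ℝ) + 1) * (1 - p) with hc
  have hcpos : 0 < c := by
    have h1p : (0:ℝ) < 1 - p := by linarith [hp.2]
    positivity
  have hder : ∀ x ∈ Set.Ici (0:ℝ),
      HasDerivAt (fun l => -(p + (1 - p) * Real.exp (-l)) ^ (n + 1) / c)
        ((p + (1 - p) * Real.exp (-x)) ^ n * Real.exp (-x)) x := by
    intro x _
    have h1 : HasDerivAt (fun l : ℝ => p + (1 - p) * Real.exp (-l))
        ((1 - p) * (Real.exp (-x) * (-1))) x := by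
      have := ((hasDerivAt_id x).neg.exp).const_mul (1 - p)
      simpa using this.const_add p
    have h2 := (h1.pow (n + 1)).neg.div_const c
    refine h2.congr_deriv ?_
    rw [Nat.add_sub_cancel, hc]
    field_simp
    push_cast
    ring
  have hlim : Tendsto (fun l => -(p + (1 - p) * Real.exp (-l)) ^ (n + 1) / c) atTop
      (nhds (-p ^ (n + 1) / c)) := by
    have h0 : Tendsto (fun l : ℝ => Real.exp (-l)) atTop (nhds 0) := by
      simpa using Real.tendsto_exp_neg_atTop_nhds_zero
    have h1 : Tendsto (fun l : ℝ => p + (1 - p) * Real.exp (-l)) atTop (nhds p) := by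
      simpa using (h0.const_mul (1 - p)).const_add p
    exact ((h1.pow (n + 1)).neg).div_const c
  rw [integral_Ioi_of_hasDerivAt_of_tendsto' hder (zip_aux_integrable n hp) hlim]
  have hgeom : ∑ j ∈ Finset.range (n + 1), p ^ j = (p ^ (n + 1) - 1) / (p - 1) :=
    geom_sum_eq (by linarith [hp.2] : p ≠ 1) (n + 1)
  rw [hgeom, hc]
  have hn1 : ((n:ℝ) + 1) ≠ 0 := by positivity
  simp only [neg_zero, Real.exp_zero, mul_one]
  field_simp
  ring

/-- For the all-zero sample of size `n`, with the `Exponential(1)` prior for `λ`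
and a uniform prior for `p`, the Bayes factor of the ZIP model against the
Poisson model is `B₁₀(0⃗) = Σ_{j=0}^n 1/(j+1)`, and `B₁₀(0⃗)/log(n+1) → 1` as
`n → ∞`. -/
theorem zip_all_zero_exponential_bayes_factor :
    (∀ n : ℕ, 1 ≤ n →
      (∫⁻ p in Set.Ioo (0 : ℝ) 1, ∫⁻ l in Set.Ioi (0 : ℝ),
          ENNReal.ofReal ((p + (1 - p) * Real.exp (-l)) ^ n * Real.exp (-l))) /
        (∫⁻ l in Set.Ioi (0 : ℝ), ENNReal.ofReal (Real.exp (-((n : ℝ) + 1) * l))) =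
      ENNReal.ofReal (∑ j ∈ Finset.range (n + 1), 1 / ((j : ℝ) + 1))) ∧
    Filter.Tendsto (fun n : ℕ =>
        (∑ j ∈ Finset.range (n + 1), 1 / ((j : ℝ) + 1)) / Real.log ((n : ℝ) + 1))
      Filter.atTop (nhds 1) := by
  constructor
  · intro n _
    have hn1 : (0:ℝ) < (n:ℝ) + 1 := by positivity
    have hden : (∫⁻ l in Set.Ioi (0 : ℝ), ENNReal.ofReal (Real.exp (-((n : ℝ) + 1) * l))) =
        ENNReal.ofReal (((n:ℝ) + 1)⁻¹) := by
      rw [← ofReal_integral_eq_lintegral_ofReal (exp_neg_integrableOn_Ioi 0 hn1)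
        (Filter.Eventually.of_forall fun x => (Real.exp_pos _).le),
        zip_aux_exp_integral _ hn1]
    have hinner : ∀ p ∈ Set.Ioo (0:ℝ) 1,
        (∫⁻ l in Set.Ioi (0 : ℝ),
            ENNReal.ofReal ((p + (1 - p) * Real.exp (-l)) ^ n * Real.exp (-l))) =
        ENNReal.ofReal ((∑ j ∈ Finset.range (n + 1), p ^ j) / ((n : ℝ) + 1)) := by
      intro p hp
      rw [← ofReal_integral_eq_lintegral_ofReal (zip_aux_integrable n hp) ?_,
        zip_aux_inner_val n hp]
      filter_upwards with l
      have hp0 : 0 < p := hp.1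
      have hp1 : 0 < 1 - p := by linarith [hp.2]
      positivity
    have hcont : Continuous
        (fun p : ℝ => (∑ j ∈ Finset.range (n+1), p ^ j) / ((n:ℝ) + 1)) :=
      (continuous_finset_sum _ fun i _ => continuous_pow i).div_const _
    have hIntOn : IntegrableOn
        (fun p : ℝ => (∑ j ∈ Finset.range (n+1), p ^ j) / ((n:ℝ) + 1))
        (Set.Ioo (0:ℝ) 1) :=
      (hcont.integrableOn_Icc).mono_set Set.Ioo_subset_Icc_self
    have hnn : 0 ≤ᵐ[volume.restrict (Set.Ioo (0:ℝ) 1)]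
        (fun p : ℝ => (∑ j ∈ Finset.range (n+1), p ^ j) / ((n:ℝ) + 1)) := by
      filter_upwards [ae_restrict_mem measurableSet_Ioo] with p hp
      have hp0 : 0 < p := hp.1
      have : 0 ≤ ∑ j ∈ Finset.range (n+1), p ^ j :=
        Finset.sum_nonneg fun j _ => by positivity
      positivity
    have hval : (∫ p in Set.Ioo (0:ℝ) 1,
          (∑ j ∈ Finset.range (n+1), p ^ j) / ((n:ℝ) + 1)) =
        (∑ j ∈ Finset.range (n + 1), 1 / ((j : ℝ) + 1)) / ((n:ℝ) + 1) := by
      rw [← integral_Ioc_eq_integral_Ioo, ← intervalIntegral.integral_of_le zero_le_one,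
        intervalIntegral.integral_div,
        intervalIntegral.integral_finset_sum
          (fun i _ => intervalIntegral.intervalIntegrable_pow i)]
      congr 1
      apply Finset.sum_congr rfl
      intro j _
      rw [integral_pow]
      norm_num
    have hnum : (∫⁻ p in Set.Ioo (0 : ℝ) 1, ∫⁻ l in Set.Ioi (0 : ℝ),
          ENNReal.ofReal ((p + (1 - p) * Real.exp (-l)) ^ n * Real.exp (-l))) =
        ENNReal.ofReal ((∑ j ∈ Finset.range (n + 1), 1 / ((j : ℝ) + 1)) / ((n:ℝ) + 1)) := by
      rw [setLIntegral_congr_fun measurableSet_Ioo hinner,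
        ← ofReal_integral_eq_lintegral_ofReal hIntOn hnn, hval]
    rw [hnum, hden, ← ENNReal.ofReal_div_of_pos (by positivity)]
    congr 1
    field_simp
  · have hS : ∀ n : ℕ, (∑ j ∈ Finset.range (n+1), 1/((j:ℝ)+1)) = (harmonic (n+1) : ℝ) := by
      intro n
      rw [harmonic]
      push_cast
      simp [one_div]
    have hlogtop : Tendsto (fun n : ℕ => Real.log ((n:ℝ) + 1)) atTop atTop :=
      Real.tendsto_log_atTop.comp
        (tendsto_atTop_add_const_right _ 1 tendsto_natCast_atTop_atTop)
    have hupper : Tendsto (fun n : ℕ => 1 + (Real.log ((n:ℝ) + 1))⁻¹) atTop (nhds 1) := by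
      simpa using (tendsto_const_nhds (x := (1:ℝ))).add hlogtop.inv_tendsto_atTop
    refine tendsto_of_tendsto_of_tendsto_of_le_of_le' tendsto_const_nhds hupper ?_ ?_
    · filter_upwards [eventually_ge_atTop 1] with n hn
      have hlog : 0 < Real.log ((n:ℝ) + 1) := by
        apply Real.log_pos
        have : (1:ℝ) ≤ (n:ℝ) := by exact_mod_cast hn
        linarith
      rw [le_div_iff₀ hlog, one_mul, hS]
      have h1 := log_add_one_le_harmonic (n + 1)
      have h2 : Real.log ((n:ℝ) + 1) ≤ Real.log (↑(n + 1 + 1)) := by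
        apply Real.log_le_log (by positivity)
        push_cast; linarith
      linarith
    · filter_upwards [eventually_ge_atTop 1] with n hn
      have hlog : 0 < Real.log ((n:ℝ) + 1) := by
        apply Real.log_pos
        have : (1:ℝ) ≤ (n:ℝ) := by exact_mod_cast hn
        linarith
      rw [div_le_iff₀ hlog, hS]
      have h1 := harmonic_le_one_add_log (n + 1)
      have h2 : Real.log (↑(n + 1)) = Real.log ((n:ℝ) + 1) := by push_cast; ring_nf
      rw [h2] at h1
      calc (harmonic (n+1) : ℝ) ≤ 1 + Real.log ((n:ℝ)+1) := h1
        _ = (1 + (Real.log ((n:ℝ)+1))⁻¹) * Real.log ((n:ℝ)+1) := by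
          field_simp; ring
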